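/- Let f be a bent Boolean function on F_2^{2m}, and let h(x) := f(A x + b) + ⟨c, x⟩ + δ for some invertible F_2-linear map A on F_2^{2m}, b, c ∈ F_2^{2m} and δ ∈ F_2 (so h is extended affine equivalent to f). Then there exist b', c' ∈ F_2^{2m} and δ' ∈ F_2 such that the function g(x) := f(x + b') + ⟨c', x⟩ + δ' is bent and the Cayley graphs of x ↦ g(x) + g(0) and x ↦ h(x) + h(0) are isomorphic. That is, every bent function extended affine equivalent to f is extended Cayley equivalent to a bent function extended translation equivalent to f. -/

import Mathlib

open Finset

/-- Inner product on `F_2^n`. -/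
def dotp {n : ℕ} (x y : Fin n → ZMod 2) : ZMod 2 := ∑ i, x i * y i

/-- Hamming weight of a Boolean function: the cardinality of its support. -/
def wt {n : ℕ} (f : (Fin n → ZMod 2) → ZMod 2) : ℕ :=
  (Finset.univ.filter fun x => f x = 1).card

/-- Walsh–Hadamard transform of a Boolean function. -/
def walsh {n : ℕ} (f : (Fin n → ZMod 2) → ZMod 2) (x : Fin n → ZMod 2) : ℤ :=
  ∑ y : Fin n → ZMod 2, (-1 : ℤ) ^ (f y + dotp x y).val

/-- A Boolean function on `F_2^(2m)` is bent if its Walsh–Hadamard transform has constant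
absolute value `2^m`. -/
def IsBent {m : ℕ} (f : (Fin (2 * m) → ZMod 2) → ZMod 2) : Prop :=
  ∀ x, |walsh f x| = 2 ^ m

/-- The dual of a bent function: `f̂ x = 0` if `W_f x = 2^m`, and `1` otherwise
(for bent `f` the other case is exactly `W_f x = -2^m`). -/
def dual {m : ℕ} (f : (Fin (2 * m) → ZMod 2) → ZMod 2) :
    (Fin (2 * m) → ZMod 2) → ZMod 2 :=
  fun x => if walsh f x = 2 ^ m then 0 else 1

/-- The weight class of a bent function on `F_2^(2m)`:
`0` if its weight is `2^(2m-1) - 2^(m-1)`, and `1` otherwise. -/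
def wc {m : ℕ} (f : (Fin (2 * m) → ZMod 2) → ZMod 2) : ZMod 2 :=
  if wt f = 2 ^ (2 * m - 1) - 2 ^ (m - 1) then 0 else 1

/-- The Cayley graph of a Boolean function: distinct `x`, `y` are adjacent iff `f (x+y) = 1`. -/
def cayley {n : ℕ} (f : (Fin n → ZMod 2) → ZMod 2) : SimpleGraph (Fin n → ZMod 2) where
  Adj x y := x ≠ y ∧ f (x + y) = 1
  symm := ⟨fun x y h => ⟨h.1.symm, by rw [add_comm]; exact h.2⟩⟩
  loopless := ⟨fun x h => h.1 rfl⟩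

instance cayleyAdjDecidable {n : ℕ} (f : (Fin n → ZMod 2) → ZMod 2) :
    DecidableRel (cayley f).Adj :=
  fun x y => inferInstanceAs (Decidable (x ≠ y ∧ f (x + y) = 1))

section Aux

lemma dotp_add_right {n : ℕ} (x y z : Fin n → ZMod 2) :
    dotp x (y + z) = dotp x y + dotp x z := by
  simp [dotp, mul_add, Finset.sum_add_distrib]

lemma dotp_add_left {n : ℕ} (x y z : Fin n → ZMod 2) :
    dotp (x + y) z = dotp x z + dotp y z := by
  simp [dotp, add_mul, Finset.sum_add_distrib]

lemma dotp_zero_right {n : ℕ} (x : Fin n → ZMod 2) : dotp x 0 = 0 := by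
  simp [dotp]

lemma neg_one_pow_val_add (a b : ZMod 2) :
    ((-1 : ℤ)) ^ (a + b).val = (-1 : ℤ) ^ a.val * (-1 : ℤ) ^ b.val := by revert a b; decide

lemma dotp_sum_right {n : ℕ} {ι : Type*} (c : Fin n → ZMod 2) (s : Finset ι)
    (v : ι → Fin n → ZMod 2) :
    dotp c (∑ j ∈ s, v j) = ∑ j ∈ s, dotp c (v j) := by
  simp only [dotp, Finset.sum_apply, Finset.mul_sum]
  exact Finset.sum_comm

lemma dotp_smul_right {n : ℕ} (c : Fin n → ZMod 2) (a : ZMod 2) (v : Fin n → ZMod 2) :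
    dotp c (a • v) = a * dotp c v := by
  simp [dotp, Finset.mul_sum, mul_left_comm]

lemma dotp_linear {n : ℕ} (L : (Fin n → ZMod 2) →ₗ[ZMod 2] (Fin n → ZMod 2))
    (c x : Fin n → ZMod 2) :
    dotp c (L x) = dotp (fun j => dotp c (L (Pi.single j 1))) x := by
  have hx : x = ∑ j, x j • Pi.single j (1 : ZMod 2) := by
    ext i
    simp [Pi.single_apply, Finset.sum_apply]
  conv_lhs => rw [hx]
  rw [map_sum, dotp_sum_right]
  simp only [map_smul, dotp_smul_right]
  simp [dotp, mul_comm]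

lemma walsh_shift {n : ℕ} (f : (Fin n → ZMod 2) → ZMod 2)
    (b c : Fin n → ZMod 2) (δ : ZMod 2) (u : Fin n → ZMod 2) :
    walsh (fun x => f (x + b) + dotp c x + δ) u
      = (-1 : ℤ) ^ ((δ + dotp (u + c) b).val) * walsh f (u + c) := by
  have hbb : b + b = 0 := by
    ext i
    change b i + b i = 0
    have : ∀ a : ZMod 2, a + a = 0 := by decide
    exact this _
  unfold walsh
  rw [Finset.mul_sum]
  refine (Fintype.sum_equiv (Equiv.addRight b)
    (fun z => (-1:ℤ) ^ ((δ + dotp (u + c) b).val) * (-1:ℤ) ^ ((f z + dotp (u + c) z).val))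
    _ fun z => ?_).symm
  simp only [Equiv.coe_addRight]
  have h1 : z + b + b = z := by rw [add_assoc, hbb, add_zero]
  have h2 : f (z + b + b) + dotp c (z + b) + δ + dotp u (z + b)
      = (δ + dotp (u + c) b) + (f z + dotp (u + c) z) := by
    rw [h1, dotp_add_right, dotp_add_right, dotp_add_left, dotp_add_left]; ring
  rw [h2]
  simp only [neg_one_pow_val_add]

end Aux

/-- every bent function extended affine equivalent to `f` is extended Cayley
equivalent to a bent function extended translation equivalent to `f`. -/
theorem EA_implies_ET_and_EC {m : ℕ} (f : (Fin (2 * m) → ZMod 2) → ZMod 2)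
    (hf : IsBent f)
    (A : (Fin (2 * m) → ZMod 2) ≃ₗ[ZMod 2] (Fin (2 * m) → ZMod 2))
    (b c : Fin (2 * m) → ZMod 2) (δ : ZMod 2)
    (h : (Fin (2 * m) → ZMod 2) → ZMod 2)
    (hh : ∀ x, h x = f (A x + b) + dotp c x + δ) :
    ∃ (b' c' : Fin (2 * m) → ZMod 2) (δ' : ZMod 2),
      IsBent (fun x => f (x + b') + dotp c' x + δ') ∧
      Nonempty
        (cayley (fun x => (f (x + b') + dotp c' x + δ') +
                          (f ((0 : Fin (2 * m) → ZMod 2) + b') + dotp c' 0 + δ')) ≃g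
         cayley (fun x => h x + h 0)) := by
  classical
  set c' : Fin (2 * m) → ZMod 2 := fun j => dotp c (A.symm (Pi.single j 1)) with hc'
  have hdc : ∀ x, dotp c (A.symm x) = dotp c' x := by
    intro x
    simpa using dotp_linear (A.symm : (Fin (2*m) → ZMod 2) →ₗ[ZMod 2] (Fin (2*m) → ZMod 2)) c x
  have key : ∀ w, f (w + b) + dotp c' w + δ = h (A.symm w) := by
    intro w
    rw [hh, ← hdc, A.apply_symm_apply]
  refine ⟨b, c', δ, ?_, ?_⟩
  · intro u
    rw [walsh_shift, abs_mul, abs_pow, abs_neg, abs_one, one_pow, one_mul]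
    exact hf (u + c')
  · have h0 : f ((0 : Fin (2*m) → ZMod 2) + b) + dotp c' 0 + δ = h 0 := by
      rw [key 0, map_zero]
    refine ⟨⟨A.symm.toEquiv, ?_⟩⟩
    intro x y
    show (A.symm x ≠ A.symm y ∧ _) ↔ (x ≠ y ∧ _)
    have hadd : A.symm.toEquiv x + A.symm.toEquiv y = A.symm (x + y) :=
      (map_add A.symm x y).symm
    constructor
    · rintro ⟨hne, hadj⟩
      refine ⟨fun e => hne (by rw [e]), ?_⟩
      show f (x + y + b) + dotp c' (x + y) + δ + (f (0 + b) + dotp c' 0 + δ) = 1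
      rw [key (x + y), h0]
      rw [hadd] at hadj
      exact hadj
    · rintro ⟨hne, hadj⟩
      refine ⟨fun e => hne (A.symm.injective e), ?_⟩
      show h (A.symm.toEquiv x + A.symm.toEquiv y) + h 0 = 1
      rw [hadd, ← key (x + y), ← h0]
      exact hadj
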